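/- arXiv:2211.08630 — 3 statements merged into one kernel-verified Lean document; each statement's English description precedes it below -/
import Mathlib

section
/- Let T ∈ ℝ, δ ∈ (0,∞), c ∈ 𝒢_{T,δ}, and κ ≥ 0. Define S(t) := (B(t) + κ)/A(t) for t ≥ T, and assume there exists T' ≥ T such that S is nondecreasing on [T', ∞). Then there exists t₀* > 0 such that for every t₀ ≥ t₀*, every ε ∈ (0, 1/4), and every smooth convex nondecreasing function v: ℝ → ℝ satisfying (i) v(t) = t for all t ≥ −t₀−ε, (ii) v is constant on (−∞, −t₀−1+ε), (iii) 0 ≤ v'(t) ≤ 1 for all t ∈ ℝ, and (iv) 0 ≤ v''(t) ≤ (1/(1−4ε))·𝟙_{(−t₀−1+ε, −t₀−ε)}(t) for all t ∈ ℝ, the inequality S(−v(t)) ≥ S(−t)·v'(t) holds for every t ∈ (−∞, −T). -/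
open MeasureTheory Filter Set

/-- `Afun T δ c t = (1/δ)·c(T)e^{-T} + ∫_T^t c(t₁)e^{-t₁} dt₁`. -/
noncomputable def Afun (T δ : ℝ) (c : ℝ → ℝ) (t : ℝ) : ℝ :=
  (1 / δ) * c T * Real.exp (-T) + ∫ t₁ in T..t, c t₁ * Real.exp (-t₁)

/-- `Bfun T δ c t = ∫_T^t Afun T δ c t₂ dt₂ + (1/δ²)·c(T)e^{-T}`. -/
noncomputable def Bfun (T δ : ℝ) (c : ℝ → ℝ) (t : ℝ) : ℝ :=
  (∫ t₂ in T..t, Afun T δ c t₂) + (1 / δ ^ 2) * c T * Real.exp (-T)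

/-- The class `𝒢_{T,δ}` of Guan–Zhou: continuous positive functions `c` on `[T,∞)` with
`∫_T^∞ c(t)e^{-t} dt < ∞` satisfying the key inequality
`A(t)² > c(t)e^{-t}·B(t)` for every `t > T`. -/
def GTdelta (T δ : ℝ) (c : ℝ → ℝ) : Prop :=
  ContinuousOn c (Set.Ici T) ∧ (∀ t ∈ Set.Ici T, 0 < c t) ∧
  MeasureTheory.IntegrableOn (fun t => c t * Real.exp (-t)) (Set.Ici T) ∧
  ∀ t, T < t → (Afun T δ c t) ^ 2 > c t * Real.exp (-t) * Bfun T δ c t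

open scoped ContDiff

section helpers

variable {T δ : ℝ} {c : ℝ → ℝ}

lemma aux_uIcc_sub {x y : ℝ} (hx : T ≤ x) (hy : T ≤ y) : Set.uIcc x y ⊆ Set.Ici T := by
  intro z hz
  rw [Set.mem_uIcc] at hz
  rcases hz with ⟨h1, _⟩ | ⟨h1, _⟩ <;> simp only [Set.mem_Ici] <;> linarith

lemma aux_int (hcont : ContinuousOn c (Set.Ici T)) {x y : ℝ} (hx : T ≤ x) (hy : T ≤ y) :
    IntervalIntegrable (fun t => c t * Real.exp (-t)) volume x y := by
  apply ContinuousOn.intervalIntegrable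
  exact ((hcont.mono (aux_uIcc_sub hx hy)).mul
    ((Real.continuous_exp.comp continuous_neg).continuousOn))

lemma aux_Afun_eq (hcont : ContinuousOn c (Set.Ici T)) {x y : ℝ} (hx : T ≤ x) (hy : T ≤ y) :
    Afun T δ c y = Afun T δ c x + ∫ t in x..y, c t * Real.exp (-t) := by
  unfold Afun
  have h := intervalIntegral.integral_add_adjacent_intervals
    (aux_int hcont le_rfl hx) (aux_int hcont hx hy)
  linarith

lemma aux_Aint_nonneg (hpos : ∀ t ∈ Set.Ici T, 0 < c t) {x y : ℝ}
    (hx : T ≤ x) (hxy : x ≤ y) :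
    0 ≤ ∫ t in x..y, c t * Real.exp (-t) := by
  apply intervalIntegral.integral_nonneg hxy
  intro u hu
  exact mul_nonneg (hpos u (le_trans hx hu.1)).le (Real.exp_pos _).le

lemma aux_Amono (hcont : ContinuousOn c (Set.Ici T)) (hpos : ∀ t ∈ Set.Ici T, 0 < c t)
    {x y : ℝ} (hx : T ≤ x) (hxy : x ≤ y) : Afun T δ c x ≤ Afun T δ c y := by
  rw [aux_Afun_eq hcont hx (hx.trans hxy)]
  linarith [aux_Aint_nonneg hpos hx hxy]

lemma aux_AT (hδ : 0 < δ) (hpos : ∀ t ∈ Set.Ici T, 0 < c t) :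
    Afun T δ c T = (1 / δ) * c T * Real.exp (-T) ∧ 0 < Afun T δ c T := by
  have h : Afun T δ c T = (1 / δ) * c T * Real.exp (-T) := by
    unfold Afun; rw [intervalIntegral.integral_same]; ring
  refine ⟨h, ?_⟩
  rw [h]
  have := hpos T (le_refl T)
  positivity

lemma aux_Apos (hδ : 0 < δ) (hcont : ContinuousOn c (Set.Ici T))
    (hpos : ∀ t ∈ Set.Ici T, 0 < c t) {x : ℝ} (hx : T ≤ x) : 0 < Afun T δ c x :=
  lt_of_lt_of_le (aux_AT hδ hpos).2 (aux_Amono hcont hpos le_rfl hx)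

lemma aux_Atop (hpos : ∀ t ∈ Set.Ici T, 0 < c t)
    (hint : MeasureTheory.IntegrableOn (fun t => c t * Real.exp (-t)) (Set.Ici T))
    {x : ℝ} (hx : T ≤ x) :
    Afun T δ c x ≤ (1 / δ) * c T * Real.exp (-T) + ∫ t in Set.Ici T, c t * Real.exp (-t) := by
  unfold Afun
  have h1 : (∫ t in T..x, c t * Real.exp (-t)) = ∫ t in Set.Ioc T x, c t * Real.exp (-t) :=
    intervalIntegral.integral_of_le hx
  have h2 : (∫ t in Set.Ioc T x, c t * Real.exp (-t)) ≤ ∫ t in Set.Ici T, c t * Real.exp (-t) := by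
    apply setIntegral_mono_set hint
    · filter_upwards [ae_restrict_mem measurableSet_Ici] with u hu
      exact mul_nonneg (hpos u hu).le (Real.exp_pos _).le
    · exact HasSubset.Subset.eventuallyLE (fun u hu => le_of_lt hu.1)
  linarith

lemma aux_AintInt (hcont : ContinuousOn c (Set.Ici T)) (hpos : ∀ t ∈ Set.Ici T, 0 < c t)
    {x y : ℝ} (hx : T ≤ x) (hy : T ≤ y) :
    IntervalIntegrable (Afun T δ c) volume x y := by
  apply MonotoneOn.intervalIntegrable
  intro a ha b hb hab
  exact aux_Amono hcont hpos (aux_uIcc_sub hx hy ha) hab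

lemma aux_Bfun_eq (hcont : ContinuousOn c (Set.Ici T)) (hpos : ∀ t ∈ Set.Ici T, 0 < c t)
    {x y : ℝ} (hx : T ≤ x) (hy : T ≤ y) :
    Bfun T δ c y = Bfun T δ c x + ∫ t in x..y, Afun T δ c t := by
  unfold Bfun
  have h := intervalIntegral.integral_add_adjacent_intervals
    (aux_AintInt hcont hpos le_rfl hx) (aux_AintInt (δ := δ) hcont hpos hx hy)
  linarith

lemma aux_Bint_nonneg (hδ : 0 < δ) (hcont : ContinuousOn c (Set.Ici T))
    (hpos : ∀ t ∈ Set.Ici T, 0 < c t) {x y : ℝ} (hx : T ≤ x) (hxy : x ≤ y) :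
    0 ≤ ∫ t in x..y, Afun T δ c t := by
  apply intervalIntegral.integral_nonneg hxy
  intro u hu
  exact (aux_Apos hδ hcont hpos (hx.trans hu.1)).le

lemma aux_Bnonneg (hδ : 0 < δ) (hcont : ContinuousOn c (Set.Ici T))
    (hpos : ∀ t ∈ Set.Ici T, 0 < c t) {x : ℝ} (hx : T ≤ x) : 0 ≤ Bfun T δ c x := by
  have h1 := aux_Bint_nonneg hδ hcont hpos (le_refl T) hx
  have h2 : 0 ≤ (1 / δ ^ 2) * c T * Real.exp (-T) := by
    have := hpos T (le_refl T); positivity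
  unfold Bfun
  linarith

lemma aux_Bint_ub (hcont : ContinuousOn c (Set.Ici T)) (hpos : ∀ t ∈ Set.Ici T, 0 < c t)
    (hint : MeasureTheory.IntegrableOn (fun t => c t * Real.exp (-t)) (Set.Ici T))
    {x y : ℝ} (hx : T ≤ x) (hxy : x ≤ y) :
    (∫ t in x..y, Afun T δ c t) ≤ (y - x) *
      ((1 / δ) * c T * Real.exp (-T) + ∫ t in Set.Ici T, c t * Real.exp (-t)) := by
  have hptw : ∀ u ∈ Set.Icc x y, Afun T δ c u ≤
      (1 / δ) * c T * Real.exp (-T) + ∫ t in Set.Ici T, c t * Real.exp (-t) :=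
    fun u hu => aux_Atop hpos hint (hx.trans hu.1)
  have h := intervalIntegral.integral_mono_on hxy
    (aux_AintInt hcont hpos hx (hx.trans hxy)) intervalIntegrable_const hptw
  rwa [intervalIntegral.integral_const, smul_eq_mul] at h

lemma aux_Bint_lb (hcont : ContinuousOn c (Set.Ici T)) (hpos : ∀ t ∈ Set.Ici T, 0 < c t)
    {s : ℝ} (hs : T ≤ s) :
    (s - T) * Afun T δ c T ≤ ∫ t in T..s, Afun T δ c t := by
  have h := intervalIntegral.integral_mono_on hs intervalIntegrable_const
    (aux_AintInt (δ := δ) hcont hpos le_rfl hs)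
    (fun u hu => aux_Amono (δ := δ) hcont hpos le_rfl hu.1)
  rwa [intervalIntegral.integral_const, smul_eq_mul] at h

end helpers

set_option maxHeartbeats 1600000 in
/-- **Key inequality for `S(−v_{t₀,ε}(t))`** (Lemma on the cut-off functions).
For `c ∈ 𝒢_{T,δ}`, `κ ≥ 0`, `S(t) = (B(t)+κ)/A(t)`, if `S` is nondecreasing on some
`[T',∞)`, then there is `t₀* > 0` such that for all `t₀ ≥ t₀*`, `ε ∈ (0,1/4)` and every
smooth convex nondecreasing `v : ℝ → ℝ` with (i) `v(t) = t` for `t ≥ −t₀−ε`,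
(ii) `v` constant on `(−∞,−t₀−1+ε)`, (iii) `0 ≤ v' ≤ 1`,
(iv) `0 ≤ v'' ≤ (1/(1−4ε))·𝟙_{(−t₀−1+ε,−t₀−ε)}`, one has
`S(−v(t)) ≥ S(−t)·v'(t)` for every `t < −T`. -/
theorem S_inequality_along_cutoff (T δ : ℝ) (hδ : 0 < δ) (c : ℝ → ℝ) (hc : GTdelta T δ c)
    (κ : ℝ) (hκ : 0 ≤ κ) (S : ℝ → ℝ)
    (hS : ∀ t, S t = (Bfun T δ c t + κ) / Afun T δ c t)
    (T' : ℝ) (hT' : T ≤ T') (hSmono : MonotoneOn S (Set.Ici T')) :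
    ∃ t₀star : ℝ, 0 < t₀star ∧ ∀ t₀, t₀star ≤ t₀ → ∀ ε ∈ Set.Ioo (0 : ℝ) (1 / 4),
      ∀ v : ℝ → ℝ, ContDiff ℝ ∞ v → ConvexOn ℝ Set.univ v → Monotone v →
        (∀ t, -t₀ - ε ≤ t → v t = t) →
        (∀ s ∈ Set.Iio (-t₀ - 1 + ε), ∀ t ∈ Set.Iio (-t₀ - 1 + ε), v s = v t) →
        (∀ t, 0 ≤ deriv v t ∧ deriv v t ≤ 1) →
        (∀ t, 0 ≤ deriv (deriv v) t ∧ deriv (deriv v) t ≤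
          (1 / (1 - 4 * ε)) *
            Set.indicator (Set.Ioo (-t₀ - 1 + ε) (-t₀ - ε)) (fun _ => (1 : ℝ)) t) →
        ∀ t, t < -T → S (-t) * deriv v t ≤ S (-v t) := by
  obtain ⟨hcont, hpos, hint, _⟩ := hc
  obtain ⟨AT, hATdef⟩ : ∃ x : ℝ, x = Afun T δ c T := ⟨_, rfl⟩
  obtain ⟨Atop, hAtopdef⟩ : ∃ x : ℝ,
    x = (1 / δ) * c T * Real.exp (-T) + ∫ t in Set.Ici T, c t * Real.exp (-t) := ⟨_, rfl⟩
  have hAT : 0 < AT := by rw [hATdef]; exact (aux_AT hδ hpos).2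
  have hAle : ∀ x : ℝ, T ≤ x → Afun T δ c x ≤ Atop := by
    intro x hx; rw [hAtopdef]; exact aux_Atop hpos hint hx
  have hAtop : 0 < Atop := lt_of_lt_of_le hAT (by rw [hATdef]; exact hAle T le_rfl)
  obtain ⟨R, hRdef⟩ : ∃ x : ℝ, x = Atop / AT := ⟨_, rfl⟩
  have hR : 0 < R := by rw [hRdef]; exact div_pos hAtop hAT
  have hRAT : R * AT = Atop := by rw [hRdef]; field_simp
  obtain ⟨w₀, hw₀def⟩ : ∃ x : ℝ, x = T + R * R := ⟨_, rfl⟩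
  have hTw₀ : T < w₀ := by rw [hw₀def]; nlinarith
  obtain ⟨tstar, htstardef⟩ : ∃ x : ℝ, x = max (max w₀ T') 1 := ⟨_, rfl⟩
  have htstar_pos : 0 < tstar := by
    rw [htstardef]; exact lt_of_lt_of_le one_pos (le_max_right _ _)
  refine ⟨tstar, htstar_pos, ?_⟩
  have hw₀star : w₀ ≤ tstar := by
    rw [htstardef]; exact le_trans (le_max_left _ _) (le_max_left _ _)
  have hT'star : T' ≤ tstar := by
    rw [htstardef]; exact le_trans (le_max_right _ _) (le_max_left _ _)
  have hTstar : T < tstar := lt_of_lt_of_le hTw₀ hw₀star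
  -- S is nonnegative on [T, ∞)
  have hSnn : ∀ s : ℝ, T ≤ s → 0 ≤ S s := by
    intro s hs
    rw [hS s]
    exact div_nonneg (add_nonneg (aux_Bnonneg hδ hcont hpos hs) hκ)
      (aux_Apos hδ hcont hpos hs).le
  -- S is at least R beyond tstar
  have hSge : ∀ s : ℝ, tstar ≤ s → R ≤ S s := by
    intro s hs
    have hTs : T ≤ s := le_trans hTstar.le hs
    have hApos : 0 < Afun T δ c s := aux_Apos hδ hcont hpos hTs
    have hAub : Afun T δ c s ≤ Atop := hAle s hTs
    have hBlb : (s - T) * AT ≤ Bfun T δ c s := by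
      have h1 := aux_Bint_lb (δ := δ) hcont hpos hTs
      have h2 : 0 ≤ (1 / δ ^ 2) * c T * Real.exp (-T) := by
        have := hpos T (le_refl T); positivity
      rw [hATdef]
      unfold Bfun
      linarith
    rw [hS s, le_div_iff₀ hApos]
    have hw₀s : w₀ ≤ s := le_trans hw₀star hs
    have h3 : R * Afun T δ c s ≤ R * Atop := by nlinarith
    have h4 : R * Atop = (w₀ - T) * AT := by
      rw [hw₀def, ← hRAT]; ring
    have h5 : (w₀ - T) * AT ≤ (s - T) * AT := by nlinarith
    linarith
  -- Lipschitz-type upper bound for S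
  have hLip : ∀ x y : ℝ, T ≤ x → x ≤ y → S y ≤ S x + R * (y - x) := by
    intro x y hx hxy
    have hy : T ≤ y := hx.trans hxy
    have hAx : 0 < Afun T δ c x := aux_Apos hδ hcont hpos hx
    have hAy : 0 < Afun T δ c y := aux_Apos hδ hcont hpos hy
    have hAxy : Afun T δ c x ≤ Afun T δ c y := aux_Amono hcont hpos hx hxy
    have hATx : AT ≤ Afun T δ c x := by
      rw [hATdef]; exact aux_Amono hcont hpos le_rfl hx
    have hBy : Bfun T δ c y = Bfun T δ c x + ∫ t in x..y, Afun T δ c t :=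
      aux_Bfun_eq hcont hpos hx hy
    have hI0 : 0 ≤ ∫ t in x..y, Afun T δ c t := aux_Bint_nonneg hδ hcont hpos hx hxy
    have hIub : (∫ t in x..y, Afun T δ c t) ≤ (y - x) * Atop := by
      rw [hAtopdef]; exact aux_Bint_ub hcont hpos hint hx hxy
    have hBκy : 0 ≤ Bfun T δ c y + κ := add_nonneg (aux_Bnonneg hδ hcont hpos hy) hκ
    rw [hS x, hS y]
    have step1 : (Bfun T δ c y + κ) / Afun T δ c y ≤ (Bfun T δ c y + κ) / Afun T δ c x := by
      rw [div_le_div_iff₀ hAy hAx]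
      nlinarith
    have step2 : (Bfun T δ c y + κ) / Afun T δ c x
        = (Bfun T δ c x + κ) / Afun T δ c x + (∫ t in x..y, Afun T δ c t) / Afun T δ c x := by
      rw [hBy]; ring
    have step3 : (∫ t in x..y, Afun T δ c t) / Afun T δ c x ≤ R * (y - x) := by
      rw [div_le_iff₀ hAx]
      have h6 : R * (y - x) * AT = (y - x) * Atop := by rw [← hRAT]; ring
      nlinarith [mul_nonneg (mul_nonneg hR.le (sub_nonneg.2 hxy)) (sub_nonneg.2 hATx)]
    linarith
  -- main part
  intro t₀ ht₀ ε hε v hv hconv hmono hid hconst hv' hv''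
  have hdiff : Differentiable ℝ v := hv.differentiable (by simp)
  have hdv_cont : Continuous (deriv v) := hv.continuous_deriv (by exact_mod_cast le_top)
  have hddiff : Differentiable ℝ (deriv v) :=
    (contDiff_infty_iff_deriv.mp hv).2.differentiable (by simp)
  have hdmono : Monotone (deriv v) := monotone_of_deriv_nonneg hddiff (fun x => (hv'' x).1)
  obtain ⟨hε0, hε4⟩ := hε
  have hvb : v (-t₀ - ε) = -t₀ - ε := hid _ le_rfl
  have hlb : ∀ t : ℝ, t ≤ -t₀ - ε → (-t₀ - ε - t) * deriv v t ≤ (-t₀ - ε) - v t := by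
    intro t ht
    have hftc : (∫ s in t..(-t₀ - ε), deriv v s) = v (-t₀ - ε) - v t :=
      intervalIntegral.integral_deriv_eq_sub (fun x _ => hdiff x)
        (hdv_cont.intervalIntegrable _ _)
    have hpt : ∀ u ∈ Set.Icc t (-t₀ - ε), (fun _ : ℝ => deriv v t) u ≤ deriv v u :=
      fun u hu => hdmono hu.1
    have h := intervalIntegral.integral_mono_on (μ := volume) ht
      (intervalIntegrable_const (c := deriv v t)) (hdv_cont.intervalIntegrable _ _) hpt
    rw [intervalIntegral.integral_const, smul_eq_mul, hftc, hvb] at h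
    linarith [h]
  intro t ht
  rcases le_or_gt (-t₀ - ε) t with hcase | hcase
  · -- t ≥ -t₀ - ε : here v t = t
    rw [hid t hcase]
    have h0 : 0 ≤ S (-t) := hSnn _ (by linarith)
    exact mul_le_of_le_one_right h0 (hv' t).2
  · rcases lt_or_ge t (-t₀ - 1 + ε) with hcase2 | hcase2
    · -- v is locally constant near t
      have hd0 : deriv v t = 0 := by
        have hev : v =ᶠ[nhds t] fun _ => v t := by
          filter_upwards [Iio_mem_nhds hcase2] with s hs
          exact hconst s hs t hcase2
        rw [hev.deriv_eq, deriv_const]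
      rw [hd0, mul_zero]
      apply hSnn
      have h1 : v t ≤ -t₀ - ε := by rw [← hvb]; exact hmono hcase.le
      have ht₀T : T < t₀ + ε := by
        have : T < t₀ := lt_of_lt_of_le hTstar ht₀
        linarith
      linarith
    · -- transition zone
      obtain ⟨L, hLdef⟩ : ∃ x : ℝ, x = -t₀ - ε - t := ⟨_, rfl⟩
      obtain ⟨d, hddef⟩ : ∃ x : ℝ, x = deriv v t := ⟨_, rfl⟩
      have hL0 : 0 < L := by rw [hLdef]; linarith
      have hL1 : L ≤ 1 := by rw [hLdef]; linarith
      have hd0 : 0 ≤ d := by rw [hddef]; exact (hv' t).1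
      have hd1 : d ≤ 1 := by rw [hddef]; exact (hv' t).2
      have hvt_ub : v t ≤ -t₀ - ε - L * d := by
        have h := hlb t hcase.le
        rw [← hddef, ← hLdef] at h
        linarith
      obtain ⟨y, hydef⟩ : ∃ x : ℝ, x = t₀ + ε + L * d := ⟨_, rfl⟩
      have hLd0 : 0 ≤ L * d := mul_nonneg hL0.le hd0
      have hstary : tstar ≤ y := by rw [hydef]; linarith
      have hTy : T ≤ y := le_trans hTstar.le hstary
      have hyvt : y ≤ -v t := by rw [hydef]; linarith
      have hnegt : -t = t₀ + ε + L := by rw [hLdef]; ring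
      have hty : y ≤ -t := by rw [hydef, hnegt]; nlinarith
      have hSy : R ≤ S y := hSge y hstary
      have hmono1 : S y ≤ S (-v t) :=
        hSmono (Set.mem_Ici.2 (le_trans hT'star hstary))
          (Set.mem_Ici.2 (le_trans (le_trans hT'star hstary) hyvt)) hyvt
      have hlip := hLip y (-t) hTy hty
      have hnty : -t - y = L * (1 - d) := by rw [hydef, hnegt]; ring
      rw [hnty] at hlip
      have hRLd : R * L * d ≤ R := by nlinarith
      have key : 0 ≤ (1 - d) * (S y - R * L * d) :=
        mul_nonneg (by linarith) (by linarith)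
      rw [← hddef]
      nlinarith [mul_le_mul_of_nonneg_right hlip hd0]
end

section
/- Let T ∈ ℝ, δ ∈ (0,∞), and let c ∈ 𝒢_{T,δ} be continuously differentiable on (T, ∞). Define s(t) := B(t)/A(t) and u(t) := −log A(t). Then for every t ∈ (T, ∞): (a) u''(t)·s(t) − s''(t) = −s'(t)·u'(t) > 0; and (b) (s(t) + s'(t)²/(u''(t)·s(t) − s''(t)))·e^{u(t) − t} = 1/c(t). -/
open MeasureTheory Filter Set

/-- **Second-order identities for `s` and `u`.**
For `c ∈ 𝒢_{T,δ}` which is `C¹` on `(T,∞)`, with `s(t) = B(t)/A(t)` and `u(t) = −log A(t)`,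
for every `t > T`: (a) `u''(t)s(t) − s''(t) = −s'(t)u'(t) > 0`;
(b) `(s(t) + s'(t)²/(u''(t)s(t) − s''(t)))·e^{u(t)−t} = 1/c(t)`. -/
theorem s_u_second_order_identities (T δ : ℝ) (hδ : 0 < δ) (c : ℝ → ℝ) (hc : GTdelta T δ c)
    (hc1 : ContDiffOn ℝ 1 c (Set.Ioi T))
    (s u : ℝ → ℝ)
    (hs : ∀ t, s t = Bfun T δ c t / Afun T δ c t)
    (hu : ∀ t, u t = -Real.log (Afun T δ c t)) :
    ∀ t, T < t →
      (deriv (deriv u) t * s t - deriv (deriv s) t = -(deriv s t * deriv u t) ∧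
        0 < -(deriv s t * deriv u t)) ∧
      (s t + (deriv s t) ^ 2 / (deriv (deriv u) t * s t - deriv (deriv s) t)) *
          Real.exp (u t - t) = 1 / c t := by
  obtain ⟨hcont, hpos, hint, hineq⟩ := hc
  have hsE : s = fun t => Bfun T δ c t / Afun T δ c t := funext hs
  have huE : u = fun t => -Real.log (Afun T δ c t) := funext hu
  subst hsE huE
  set g : ℝ → ℝ := fun t => c t * Real.exp (-t) with hgdef
  have hgcont : ContinuousOn g (Set.Ici T) :=
    hcont.mul (Real.continuous_exp.comp continuous_neg).continuousOn
  have hgcontO : ContinuousOn g (Set.Ioi T) := hgcont.mono Set.Ioi_subset_Ici_self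
  have hgII : ∀ t, T ≤ t → IntervalIntegrable g MeasureTheory.volume T t := by
    intro t ht
    exact (hgcont.mono (by rw [Set.uIcc_of_le ht]; exact Set.Icc_subset_Ici_self)).intervalIntegrable
  have hgpos : ∀ t, T ≤ t → 0 < g t := fun t ht =>
    mul_pos (hpos t ht) (Real.exp_pos _)
  have hApos : ∀ t, T ≤ t → 0 < Afun T δ c t := by
    intro t ht
    have h1 : 0 < (1 / δ) * c T * Real.exp (-T) := by
      have := hpos T Set.self_mem_Ici
      positivity
    have h2 : 0 ≤ ∫ t₁ in T..t, g t₁ :=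
      intervalIntegral.integral_nonneg ht (fun x hx => (hgpos x hx.1).le)
    unfold Afun
    linarith
  have hA' : ∀ t, T < t → HasDerivAt (Afun T δ c) (g t) t := by
    intro t ht
    have h := intervalIntegral.integral_hasDerivAt_right (hgII t ht.le)
        (hgcontO.stronglyMeasurableAtFilter isOpen_Ioi t ht)
        (hgcontO.continuousAt (Ioi_mem_nhds ht))
    exact h.const_add _
  have hAII : ∀ t, T ≤ t → IntervalIntegrable (Afun T δ c) MeasureTheory.volume T t := by
    intro t ht
    have hiO : IntegrableOn g (Set.uIcc T t) MeasureTheory.volume :=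
      (hgcont.mono (by rw [Set.uIcc_of_le ht]; exact Set.Icc_subset_Ici_self)).integrableOn_compact
        (by rw [Set.uIcc_of_le ht]; exact isCompact_Icc)
    have hAc : ContinuousOn (Afun T δ c) (Set.uIcc T t) := by
      unfold Afun
      exact continuousOn_const.add (intervalIntegral.continuousOn_primitive_interval hiO)
    exact hAc.intervalIntegrable
  have hAcontO : ContinuousOn (Afun T δ c) (Set.Ioi T) := fun x hx =>
    ((hA' x hx).continuousAt).continuousWithinAt
  have hB' : ∀ t, T < t → HasDerivAt (Bfun T δ c) (Afun T δ c t) t := by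
    intro t ht
    have h := intervalIntegral.integral_hasDerivAt_right (hAII t ht.le)
        (hAcontO.stronglyMeasurableAtFilter isOpen_Ioi t ht)
        (hAcontO.continuousAt (Ioi_mem_nhds ht))
    exact h.add_const _
  have hc' : ∀ t, T < t → HasDerivAt c (deriv c t) t := by
    intro t ht
    exact (((hc1.differentiableOn one_ne_zero) t ht).differentiableAt
      (isOpen_Ioi.mem_nhds ht)).hasDerivAt
  have hg' : ∀ t, T < t → HasDerivAt g (deriv c t * Real.exp (-t) - c t * Real.exp (-t)) t := by
    intro t ht
    have he : HasDerivAt (fun t => Real.exp (-t)) (-Real.exp (-t)) t := by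
      exact ((Real.hasDerivAt_exp (-t)).comp t (hasDerivAt_neg t)).congr_deriv (by ring)
    have := (hc' t ht).mul he
    exact this.congr_deriv (by ring)
  -- first derivatives of s and u on Ioi T
  set s1 : ℝ → ℝ := fun t => 1 - Bfun T δ c t * g t / (Afun T δ c t) ^ 2 with hs1def
  set u1 : ℝ → ℝ := fun t => -(g t / Afun T δ c t) with hu1def
  have hAne : ∀ t, T < t → Afun T δ c t ≠ 0 := fun t ht => (hApos t ht.le).ne'
  have hsderiv : ∀ t, T < t →
      HasDerivAt (fun t => Bfun T δ c t / Afun T δ c t) (s1 t) t := by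
    intro t ht
    have h := (hB' t ht).div (hA' t ht) (hAne t ht)
    have heq : (Afun T δ c t * Afun T δ c t - Bfun T δ c t * g t) / (Afun T δ c t) ^ 2 = s1 t := by
      simp only [hs1def]
      rw [sub_div, ← pow_two, div_self (pow_ne_zero 2 (hAne t ht))]
    exact heq ▸ h
  have huderiv : ∀ t, T < t →
      HasDerivAt (fun t => -Real.log (Afun T δ c t)) (u1 t) t := by
    intro t ht
    have h := ((hA' t ht).log (hAne t ht)).neg
    exact h
  have hds : ∀ t, T < t → deriv (fun t => Bfun T δ c t / Afun T δ c t) t = s1 t :=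
    fun t ht => (hsderiv t ht).deriv
  have hdu : ∀ t, T < t → deriv (fun t => -Real.log (Afun T δ c t)) t = u1 t :=
    fun t ht => (huderiv t ht).deriv
  -- second derivatives
  intro t ht
  have hAt := hApos t ht.le
  have hgt := hgpos t ht.le
  have hct := hpos t ht.le
  have hkey := hineq t ht
  set A := Afun T δ c t
  set B := Bfun T δ c t
  have hdds : deriv (deriv (fun t => Bfun T δ c t / Afun T δ c t)) t = deriv s1 t := by
    apply Filter.EventuallyEq.deriv_eq
    filter_upwards [isOpen_Ioi.mem_nhds ht] with x hx
    exact hds x hx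
  have hddu : deriv (deriv (fun t => -Real.log (Afun T δ c t))) t = deriv u1 t := by
    apply Filter.EventuallyEq.deriv_eq
    filter_upwards [isOpen_Ioi.mem_nhds ht] with x hx
    exact hdu x hx
  set c' := deriv c t
  set g' := c' * Real.exp (-t) - c t * Real.exp (-t) with hg'def
  -- deriv s1
  have hds1 : HasDerivAt s1 (-(((A * g t + B * g') * A ^ 2 - B * g t * (2 * A * g t)) / (A ^ 2) ^ 2)) t := by
    have h1 : HasDerivAt (fun x => Bfun T δ c x * g x) (A * g t + B * g') t :=
      by exact (hB' t ht).mul (hg' t ht)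
    have h2 : HasDerivAt (fun x => (Afun T δ c x) ^ 2) (2 * A * g t) t := by
      have := ((hA' t ht).pow 2)
      exact this.congr_deriv (by rw [show (2:ℕ) - 1 = 1 from rfl]; simp only [A, pow_one, Nat.cast_ofNat])
    have h3 := h1.div h2 (by positivity)
    have h4 := h3.neg.const_add 1
    simpa [hs1def, sub_eq_add_neg] using h4
  have hdu1 : HasDerivAt u1 (-((g' * A - g t * g t) / A ^ 2)) t := by
    have h := ((hg' t ht).div (hA' t ht) (hAne t ht)).neg
    exact h
  have eds1 : deriv s1 t = -(((A * g t + B * g') * A ^ 2 - B * g t * (2 * A * g t)) / (A ^ 2) ^ 2) :=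
    hds1.deriv
  have edu1 : deriv u1 t = -((g' * A - g t * g t) / A ^ 2) := hdu1.deriv
  rw [hdds, hddu, hds t ht, hdu t ht, eds1, edu1]
  have hsimp : s1 t = 1 - B * g t / A ^ 2 := rfl
  have husimp : u1 t = -(g t / A) := rfl
  rw [hsimp, husimp]
  have hexp : Real.exp (-Real.log A - t) = Real.exp (-t) / A := by
    rw [Real.exp_sub, Real.exp_neg, Real.exp_neg, Real.exp_log hAt]
    ring
  have hAne' : A ≠ 0 := hAt.ne'
  have hgE : g t = c t * Real.exp (-t) := rfl
  simp only [show Afun T δ c t = A from rfl, show Bfun T δ c t = B from rfl]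
  constructor
  · constructor
    · field_simp
      ring
    · have key : -((1 - B * g t / A ^ 2) * -(g t / A)) = g t * (A ^ 2 - B * g t) / A ^ 3 := by
        field_simp
      rw [key]
      have h1 : 0 < A ^ 2 - B * g t := by
        have := hkey
        rw [← hgE] at this
        linarith [this]
      positivity
  · have hden : -((g' * A - g t * g t) / A ^ 2) * (B / A) -
        -(((A * g t + B * g') * A ^ 2 - B * g t * (2 * A * g t)) / (A ^ 2) ^ 2)
        = g t * (A ^ 2 - B * g t) / A ^ 3 := by
      field_simp
      ring
    rw [hden, hexp]
    have h1 : 0 < A ^ 2 - B * g t := by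
      have := hkey
      rw [← hgE] at this
      linarith [this]
    have hgne : g t ≠ 0 := hgt.ne'
    have h1ne : A ^ 2 - B * g t ≠ 0 := h1.ne'
    have hcne : c t ≠ 0 := hct.ne'
    rw [hgE] at hgne h1ne ⊢
    field_simp
    ring
end

section
/- Let T ∈ ℝ, δ ∈ (0,∞), and c ∈ 𝒢_{T,δ}. Define s(t) := B(t)/A(t) for t ≥ T. Then: (a) s(t) > 0 for every t ≥ T; (b) s is differentiable on (T, ∞) with s'(t) = (A(t)² − c(t)e^{−t}B(t))/A(t)², and 0 < s'(t) < 1 for every t ∈ (T, ∞); (c) s(t) → +∞ as t → +∞. -/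
open MeasureTheory Filter Set

/-- **Properties of `s(t) = B(t)/A(t)` for `c ∈ 𝒢_{T,δ}`:**
(a) `s(t) > 0` on `[T,∞)`; (b) `s` is differentiable on `(T,∞)` with
`s'(t) = (A(t)² − c(t)e^{−t}B(t))/A(t)²` and `0 < s'(t) < 1` there;
(c) `s(t) → +∞` as `t → +∞`. -/
theorem sfun_properties (T δ : ℝ) (hδ : 0 < δ) (c : ℝ → ℝ) (hc : GTdelta T δ c) :
    (∀ t, T ≤ t → 0 < Bfun T δ c t / Afun T δ c t) ∧
    (∀ t, T < t →
      HasDerivAt (fun x => Bfun T δ c x / Afun T δ c x)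
        (((Afun T δ c t) ^ 2 - c t * Real.exp (-t) * Bfun T δ c t) / (Afun T δ c t) ^ 2) t ∧
      0 < ((Afun T δ c t) ^ 2 - c t * Real.exp (-t) * Bfun T δ c t) / (Afun T δ c t) ^ 2 ∧
      ((Afun T δ c t) ^ 2 - c t * Real.exp (-t) * Bfun T δ c t) / (Afun T δ c t) ^ 2 < 1) ∧
    Tendsto (fun t => Bfun T δ c t / Afun T δ c t) atTop atTop := by
  obtain ⟨hcont, hpos, hint, hkey⟩ := hc
  have hcT : 0 < c T := hpos T self_mem_Ici
  have ha0 : 0 < (1 / δ) * c T * Real.exp (-T) := by positivity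
  have hb0 : 0 < (1 / δ ^ 2) * c T * Real.exp (-T) := by positivity
  set E : ℝ → ℝ := fun u => c u * Real.exp (-u) with hE
  have hEcont : ContinuousOn E (Ici T) :=
    hcont.mul ((Real.continuous_exp.comp continuous_neg).continuousOn)
  have hEint : ∀ t, T ≤ t → IntervalIntegrable E volume T t := by
    intro t ht
    rw [intervalIntegrable_iff_integrableOn_Icc_of_le ht]
    exact hint.mono_set Icc_subset_Ici_self
  have hEnn : ∀ u, T ≤ u → 0 ≤ E u := fun u hu =>
    mul_nonneg (hpos u hu).le (Real.exp_pos _).le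
  have hApos : ∀ t, T ≤ t → 0 < Afun T δ c t := by
    intro t ht
    have h1 : 0 ≤ ∫ u in T..t, E u :=
      intervalIntegral.integral_nonneg ht fun u hu => hEnn u hu.1
    unfold Afun; linarith
  -- derivative of A
  have hA' : ∀ t, T < t → HasDerivAt (Afun T δ c) (E t) t := by
    intro t ht
    have hmeas : StronglyMeasurableAtFilter E (nhds t) volume :=
      AEStronglyMeasurable.stronglyMeasurableAtFilter_of_mem
        (hEcont.aestronglyMeasurable measurableSet_Ici) (Ici_mem_nhds ht)
    have hca : ContinuousAt E t := hEcont.continuousAt (Ici_mem_nhds ht)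
    have := (intervalIntegral.integral_hasDerivAt_right (hEint t ht.le) hmeas hca).const_add
      ((1 / δ) * c T * Real.exp (-T))
    exact this
  have hAca : ∀ t, T < t → ContinuousAt (Afun T δ c) t := fun t ht =>
    (hA' t ht).continuousAt
  have hAcontOn : ∀ t, T ≤ t → ContinuousOn (Afun T δ c) (Icc T t) := by
    intro t ht
    have hprim : ContinuousOn (fun x => ∫ u in T..x, E u) (uIcc T t) :=
      intervalIntegral.continuousOn_primitive_interval
        (by rw [uIcc_of_le ht]
            exact (hEint t ht).1.congr_set_ae Ioc_ae_eq_Icc.symm)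
    rw [uIcc_of_le ht] at hprim
    exact continuousOn_const.add hprim
  have hAint : ∀ t, T ≤ t → IntervalIntegrable (Afun T δ c) volume T t := by
    intro t ht
    exact (hAcontOn t ht).intervalIntegrable_of_Icc ht
  have hBpos : ∀ t, T ≤ t → 0 < Bfun T δ c t := by
    intro t ht
    have h1 : 0 ≤ ∫ u in T..t, Afun T δ c u :=
      intervalIntegral.integral_nonneg ht fun u hu => (hApos u hu.1).le
    unfold Bfun; linarith
  have hB' : ∀ t, T < t → HasDerivAt (Bfun T δ c) (Afun T δ c t) t := by
    intro t ht
    have hmeas : StronglyMeasurableAtFilter (Afun T δ c) (nhds t) volume := by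
      refine AEStronglyMeasurable.stronglyMeasurableAtFilter_of_mem
        (ContinuousOn.aestronglyMeasurable ?_ measurableSet_Ioi) (Ioi_mem_nhds ht)
      exact fun x hx => (hAca x hx).continuousWithinAt
    have := (intervalIntegral.integral_hasDerivAt_right (hAint t ht.le) hmeas (hAca t ht)).add_const
      ((1 / δ ^ 2) * c T * Real.exp (-T))
    exact this
  refine ⟨fun t ht => div_pos (hBpos t ht) (hApos t ht), fun t ht => ?_, ?_⟩
  · have hAt := hApos t ht.le
    have hBt := hBpos t ht.le
    have hEBpos : 0 < c t * Real.exp (-t) * Bfun T δ c t :=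
      mul_pos (mul_pos (hpos t ht.le) (Real.exp_pos _)) hBt
    have hk := hkey t ht
    refine ⟨?_, div_pos (by linarith) (by positivity), ?_⟩
    · have := (hB' t ht).div (hA' t ht) hAt.ne'
      refine this.congr_deriv ?_
      simp only [hE]
      ring
    · rw [div_lt_one (by positivity)]
      linarith
  · -- part (c)
    set C : ℝ := (1 / δ) * c T * Real.exp (-T) + ∫ u in Ici T, E u with hC
    have hCpos : 0 < C := by
      have : 0 ≤ ∫ u in Ici T, E u :=
        setIntegral_nonneg measurableSet_Ici fun u hu => hEnn u hu
      positivity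
    have hAle : ∀ t, T ≤ t → Afun T δ c t ≤ C := by
      intro t ht
      have h1 : (∫ u in T..t, E u) ≤ ∫ u in Ici T, E u := by
        rw [intervalIntegral.integral_of_le ht]
        refine setIntegral_mono_set hint ?_ ?_
        · exact (ae_restrict_iff' measurableSet_Ici).2 (Filter.Eventually.of_forall
            fun u hu => hEnn u hu)
        · exact Filter.Eventually.of_forall fun u hu => le_of_lt hu.1
      unfold Afun; unfold C; linarith
    have hBlb : ∀ t, T ≤ t →
        (1 / δ ^ 2) * c T * Real.exp (-T) + ((1 / δ) * c T * Real.exp (-T)) * (t - T)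
          ≤ Bfun T δ c t := by
      intro t ht
      have h1 : (∫ _u in T..t, (1 / δ) * c T * Real.exp (-T)) ≤ ∫ u in T..t, Afun T δ c u := by
        refine intervalIntegral.integral_mono_on ht intervalIntegrable_const (hAint t ht) ?_
        intro u hu
        have h2 : 0 ≤ ∫ v in T..u, E v :=
          intervalIntegral.integral_nonneg hu.1 fun v hv => hEnn v hv.1
        unfold Afun; linarith
      rw [intervalIntegral.integral_const, smul_eq_mul] at h1
      unfold Bfun; nlinarith
    have hlbT : Tendsto (fun t : ℝ =>
        ((1 / δ ^ 2) * c T * Real.exp (-T) + ((1 / δ) * c T * Real.exp (-T)) * (t - T)) / C)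
        atTop atTop := by
      apply Tendsto.atTop_div_const hCpos
      apply tendsto_atTop_add_const_left
      exact (tendsto_atTop_add_const_right atTop (-T) tendsto_id).const_mul_atTop ha0
    refine tendsto_atTop_mono' atTop ?_ hlbT
    filter_upwards [eventually_ge_atTop T] with t ht
    have hAt := hApos t ht
    have hBt := hBpos t ht
    calc ((1 / δ ^ 2) * c T * Real.exp (-T) + ((1 / δ) * c T * Real.exp (-T)) * (t - T)) / C
        ≤ Bfun T δ c t / C := by
          gcongr
          exact hBlb t ht
      _ ≤ Bfun T δ c t / Afun T δ c t := by
          apply div_le_div_of_nonneg_left hBt.le hAt (hAle t ht)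
end
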